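/- Let r₀, κ, ρ : [0,T] → ℝ be continuous, and define α(s) = μ (N₁(s)+N₂(s))^{-1} κ(s), where N₁(s) = exp(∫_s^T r₀) and N₂(s) = μ exp(∫_s^T r₀) ∫_s^T exp(-∫_τ^T r₀) κ(τ) ρ(τ) dτ. Assuming N₁(s)+N₂(s) ≠ 0 for all s, the function N₂ satisfies the ODE dN₂/ds = -r₀(s) N₂(s) - (N₁(s)+N₂(s)) α(s) ρ(s) with terminal condition N₂(T) = 0. -/

import Mathlib

theorem N2_satisfies_ODE (T : ℝ) (hT : 0 < T) (μ : ℝ) (hμ : 0 ≤ μ)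
    (r₀ κ ρ : ℝ → ℝ) (hr₀ : Continuous r₀) (hκ : Continuous κ) (hρ : Continuous ρ)
    (N₁ N₂ α : ℝ → ℝ)
    (hN₁ : ∀ s, N₁ s = Real.exp (∫ τ in s..T, r₀ τ))
    (hN₂ : ∀ s, N₂ s = μ * Real.exp (∫ τ in s..T, r₀ τ) *
        ∫ τ in s..T, Real.exp (-∫ v in τ..T, r₀ v) * κ τ * ρ τ)
    (hα : ∀ s, α s = μ * (N₁ s + N₂ s)⁻¹ * κ s)
    (hne : ∀ s ∈ Set.Icc (0 : ℝ) T, N₁ s + N₂ s ≠ 0) :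
    N₂ T = 0 ∧
    ∀ s ∈ Set.Icc (0 : ℝ) T,
      HasDerivAt N₂ (-(r₀ s) * N₂ s - (N₁ s + N₂ s) * α s * ρ s) s := by
  -- deriv of s ↦ ∫ τ in s..T, r₀ τ
  have hI : ∀ s : ℝ, HasDerivAt (fun u => ∫ τ in u..T, r₀ τ) (-(r₀ s)) s := by
    intro s
    have h1 : HasDerivAt (fun u => ∫ τ in T..u, r₀ τ) (r₀ s) s :=
      intervalIntegral.integral_hasDerivAt_right (hr₀.intervalIntegrable _ _)
        (hr₀.stronglyMeasurableAtFilter _ _) hr₀.continuousAt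
    have : HasDerivAt (fun u => -∫ τ in T..u, r₀ τ) (-(r₀ s)) s := h1.neg
    simpa [intervalIntegral.integral_symm T] using this
  have hIcont : Continuous (fun u => ∫ τ in u..T, r₀ τ) :=
    continuous_iff_continuousAt.2 fun s => (hI s).continuousAt
  set f : ℝ → ℝ := fun τ => Real.exp (-∫ v in τ..T, r₀ v) * κ τ * ρ τ with hf
  have hfcont : Continuous f := ((hIcont.neg.rexp.mul hκ).mul hρ)
  set E : ℝ → ℝ := fun u => Real.exp (∫ τ in u..T, r₀ τ) with hE
  set G : ℝ → ℝ := fun u => ∫ τ in u..T, f τ with hG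
  have hEderiv : ∀ s : ℝ, HasDerivAt E (-(r₀ s) * E s) s := by
    intro s
    simpa [E, mul_comm] using (hI s).exp
  have hGderiv : ∀ s : ℝ, HasDerivAt G (-(f s)) s := by
    intro s
    have h1 : HasDerivAt (fun u => ∫ τ in T..u, f τ) (f s) s :=
      intervalIntegral.integral_hasDerivAt_right (hfcont.intervalIntegrable _ _)
        (hfcont.stronglyMeasurableAtFilter _ _) hfcont.continuousAt
    have : HasDerivAt (fun u => -∫ τ in T..u, f τ) (-(f s)) s := h1.neg
    simpa [G, intervalIntegral.integral_symm T] using this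
  constructor
  · simp [hN₂]
  · intro s hs
    have hN₂' : N₂ = fun u => μ * E u * G u := by
      funext u; simp [hN₂, E, G, f]
    have hD : HasDerivAt (fun u => μ * E u * G u)
        (μ * ((-(r₀ s) * E s) * G s + E s * (-(f s)))) s := by
      have := ((hEderiv s).mul (hGderiv s)).const_mul μ
      simpa [mul_assoc] using this
    rw [hN₂']
    convert hD using 1
    have hexp : E s * Real.exp (-∫ v in s..T, r₀ v) = 1 := by
      show Real.exp _ * _ = 1
      rw [← Real.exp_add]; simp
    have key : (N₁ s + N₂ s) * α s * ρ s = μ * κ s * ρ s := by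
      rw [hα]
      field_simp [hne s hs]
    have hEf : E s * f s = κ s * ρ s := by
      have h2 : E s * f s = κ s * ρ s * (E s * Real.exp (-∫ v in s..T, r₀ v)) := by
        simp only [f]; ring
      rw [hexp, mul_one] at h2; exact h2
    rw [hN₂'] at key
    simp only at key ⊢
    rw [key]
    linear_combination μ * hEf
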